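/- Fix a positive integer n. Let μ ∈ H(1,n) be a singular diagram and let λ be obtained from μ by adding one box to the first row. Then F_λ(μ^♯) = ∅ if λ is regular, and F_λ(μ^♯) = {λ^♯} if λ is singular. -/

import Mathlib

/-- A partition: a weakly decreasing sequence of naturals indexed from 1 (value at 0 unused, set to 0). -/
def IsPartition (P : ℕ → ℕ) : Prop :=
  P 0 = 0 ∧ ∀ i, 1 ≤ i → P (i + 1) ≤ P i

/-- `Q` is obtained from `P` by adding the box `(i,j)`. -/
def AddsBox (P Q : ℕ → ℕ) (i j : ℕ) : Prop :=
  1 ≤ i ∧ j = P i + 1 ∧ Q = Function.update P i (P i + 1) ∧ IsPartition Q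

/-- `Q` is obtained from `P` by removing the box `(i,j)`. -/
def RemovesBox (P Q : ℕ → ℕ) (i j : ℕ) : Prop :=
  1 ≤ i ∧ j = P i ∧ 1 ≤ P i ∧ Q = Function.update P i (P i - 1) ∧ IsPartition Q

/-- `Q ∈ S(P)`. -/
def InS (P Q : ℕ → ℕ) : Prop :=
  Q = P ∨ (∃ i j, AddsBox P Q i j) ∨ (∃ i j, RemovesBox P Q i j)

/-- `c̃_λ = Σ_{(i,j)∈λ} (2j − 2i + 1 − 2n)`. -/
def ctilde (n : ℕ) (P : ℕ → ℕ) (N : ℕ) : ℤ :=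
  ∑ i ∈ Finset.Icc 1 N, ∑ j ∈ Finset.Icc 1 (P i),
    (2 * (j : ℤ) - 2 * (i : ℤ) + 1 - 2 * (n : ℤ))

/-- `F_λ(μ) = {ν ∈ S(μ) : c̃_ν = c̃_λ}`. -/
def Fset (n N : ℕ) (L M : ℕ → ℕ) : Set (ℕ → ℕ) :=
  {Q | InS M Q ∧ ctilde n Q N = ctilde n L N}

/-- The conjugate partition. -/
def conj (P : ℕ → ℕ) (N : ℕ) (j : ℕ) : ℕ :=
  ((Finset.Icc 1 N).filter (fun i => j ≤ P i)).card

/-- `λ` is singular: `λ₁ − n = λ'_j + n − j` for some `1 ≤ j ≤ n`. -/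
def Singular (n N : ℕ) (P : ℕ → ℕ) : Prop :=
  ∃ j, 1 ≤ j ∧ j ≤ n ∧ (P 1 : ℤ) - (n : ℤ) = (conj P N j : ℤ) + (n : ℤ) - (j : ℤ)

/-- `r(λ) = |{r : j ≤ r ≤ n, λ'_r = λ'_j}|`. -/
def rnum (n N : ℕ) (P : ℕ → ℕ) (j : ℕ) : ℕ :=
  ((Finset.Icc j n).filter (fun r => conj P N r = conj P N j)).card

/-- `λ^♯`: delete `r` boxes from the first row and `r` boxes from the row of index `i₀`. -/
def sharp (P : ℕ → ℕ) (i₀ r : ℕ) : ℕ → ℕ :=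
  Function.update (Function.update P i₀ (P i₀ - r)) 1
    (Function.update P i₀ (P i₀ - r) 1 - r)

open Classical in
/-- The `♯`-operation: `λ^♯` on singular diagrams, identity on regular ones. -/
noncomputable def sharpOp (n N : ℕ) (P : ℕ → ℕ) : ℕ → ℕ :=
  if h : Singular n N P then
    sharp P (conj P N h.choose) (rnum n N P h.choose)
  else P


lemma part_anti {P : ℕ → ℕ} (hP : IsPartition P) {a b : ℕ} (ha : 1 ≤ a) (hab : a ≤ b) :
    P b ≤ P a := by
  induction b with
  | zero => omega
  | succ b ih =>
    rcases Nat.eq_or_lt_of_le hab with h | h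
    · exact h ▸ le_rfl
    · exact le_trans (hP.2 b (by omega)) (ih (by omega))

lemma conj_ge_iff {P : ℕ → ℕ} (hP : IsPartition P) {N : ℕ} (hN : ∀ r, N ≤ r → P r = 0)
    {j i : ℕ} (hj : 1 ≤ j) (hi : 1 ≤ i) : i ≤ conj P N j ↔ j ≤ P i := by
  constructor
  · intro h
    by_contra hc
    push_neg at hc
    have hsub : (Finset.Icc 1 N).filter (fun x => j ≤ P x) ⊆ Finset.Icc 1 (i - 1) := by
      intro a ha
      simp only [Finset.mem_filter, Finset.mem_Icc] at ha ⊢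
      refine ⟨ha.1.1, ?_⟩
      by_contra hai
      have : P a ≤ P i := part_anti hP hi (by omega)
      omega
    have := Finset.card_le_card hsub
    rw [Nat.card_Icc] at this
    unfold conj at h
    omega
  · intro h
    have hiN : i < N := by
      by_contra hc
      have := hN i (by omega)
      omega
    have hsub : Finset.Icc 1 i ⊆ (Finset.Icc 1 N).filter (fun x => j ≤ P x) := by
      intro a ha
      simp only [Finset.mem_filter, Finset.mem_Icc] at ha ⊢
      refine ⟨⟨ha.1, by omega⟩, ?_⟩
      exact le_trans h (part_anti hP ha.1 ha.2)
    have := Finset.card_le_card hsub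
    rw [Nat.card_Icc] at this
    unfold conj
    omega

lemma conj_anti (P : ℕ → ℕ) (N : ℕ) {j j' : ℕ} (h : j ≤ j') : conj P N j' ≤ conj P N j := by
  apply Finset.card_le_card
  intro a ha
  simp only [Finset.mem_filter] at ha ⊢
  exact ⟨ha.1, by omega⟩

def fI (n i m : ℕ) : ℤ := (m:ℤ)^2 + (m:ℤ)*(2 - 2*i - 2*n)

lemma sum_w (n i m : ℕ) : ∑ j ∈ Finset.Icc 1 m, (2*(j:ℤ) - 2*(i:ℤ) + 1 - 2*(n:ℤ)) = fI n i m := by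
  induction m with
  | zero => simp [fI]
  | succ m ih => rw [Finset.sum_Icc_succ_top (by omega), ih]; unfold fI; push_cast; ring

lemma ctilde_eq (n : ℕ) (Q : ℕ → ℕ) (N : ℕ) : ctilde n Q N = ∑ i ∈ Finset.Icc 1 N, fI n i (Q i) := by
  unfold ctilde
  exact Finset.sum_congr rfl (fun i _ => sum_w n i (Q i))

lemma ctilde_update (n N : ℕ) (Q : ℕ → ℕ) {a : ℕ} (ha : a ∈ Finset.Icc 1 N) (v : ℕ) :
    ctilde n (Function.update Q a v) N = ctilde n Q N + fI n a v - fI n a (Q a) := by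
  rw [ctilde_eq, ctilde_eq]
  rw [← Finset.add_sum_erase _ (fun i => fI n i (Function.update Q a v i)) ha,
      ← Finset.add_sum_erase _ (fun i => fI n i (Q i)) ha]
  have h : ∑ i ∈ (Finset.Icc 1 N).erase a, fI n i (Function.update Q a v i)
       = ∑ i ∈ (Finset.Icc 1 N).erase a, fI n i (Q i) := by
    apply Finset.sum_congr rfl
    intro x hx
    rw [Function.update_of_ne (Finset.ne_of_mem_erase hx)]
  rw [h, Function.update_self]
  ring

lemma rnum_eq {P : ℕ → ℕ} (hP : IsPartition P) {N n j : ℕ} (hN : ∀ r, N ≤ r → P r = 0)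
    (hj : 1 ≤ j) (hjn : j ≤ n) (hi0 : 1 ≤ conj P N j) :
    rnum n N P j = min n (P (conj P N j)) + 1 - j := by
  set i₀ := conj P N j
  have hfil : (Finset.Icc j n).filter (fun r => conj P N r = i₀) = Finset.Icc j (min n (P i₀)) := by
    ext k
    simp only [Finset.mem_filter, Finset.mem_Icc, le_min_iff]
    constructor
    · rintro ⟨⟨h1, h2⟩, h3⟩
      refine ⟨h1, h2, ?_⟩
      have hle : i₀ ≤ conj P N k := h3 ▸ le_rfl
      exact (conj_ge_iff hP hN (by omega) hi0).mp hle
    · rintro ⟨h1, h2, h3⟩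
      refine ⟨⟨h1, h2⟩, ?_⟩
      have hup : conj P N k ≤ i₀ := conj_anti P N h1
      have hlo : i₀ ≤ conj P N k := (conj_ge_iff hP hN (by omega) hi0).mpr h3
      omega
  unfold rnum
  rw [hfil, Nat.card_Icc]

lemma sing_pack {P : ℕ → ℕ} (hP : IsPartition P) {N n j : ℕ}
    (hN : ∀ r, N ≤ r → P r = 0) (hj : 1 ≤ j) (hjn : j ≤ n)
    (he : (P 1 : ℤ) - n = conj P N j + n - j) :
    1 ≤ conj P N j ∧ conj P N j < N ∧ j ≤ P (conj P N j) ∧ P (conj P N j + 1) < j := by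
  have h1 : 1 ≤ conj P N j := by
    have hj1 : j ≤ P 1 := by omega
    exact (conj_ge_iff hP hN hj le_rfl).mpr hj1
  have h3 : j ≤ P (conj P N j) := (conj_ge_iff hP hN hj h1).mp le_rfl
  have h2 : conj P N j < N := by
    by_contra hc
    have := hN (conj P N j) (by omega)
    omega
  have h4 : P (conj P N j + 1) < j := by
    by_contra hc
    push_neg at hc
    have : conj P N j + 1 ≤ conj P N j := (conj_ge_iff hP hN hj (by omega)).mpr hc
    omega
  exact ⟨h1, h2, h3, h4⟩

lemma conjP_eq {M P : ℕ → ℕ} (N : ℕ) {n : ℕ} (hP1 : P 1 = M 1 + 1)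
    (hPo : ∀ x, x ≠ 1 → P x = M x) (hM1 : n ≤ M 1) {k : ℕ} (hk : k ≤ n) :
    conj P N k = conj M N k := by
  unfold conj
  congr 1
  apply Finset.filter_congr
  intro x _
  by_cases hx1 : x = 1
  · subst hx1; rw [hP1]; constructor <;> (intro; omega)
  · rw [hPo x hx1]

lemma witness_char (M : ℕ → ℕ) (N n j k : ℕ) (hk1 : 1 ≤ k)
    (hjeq : (M 1:ℤ) - n = (conj M N j : ℤ) + n - j)
    (hke : (M 1:ℤ) + 1 - n = (conj M N k : ℤ) + n - k) :
    k = j - 1 ∧ conj M N (j - 1) = conj M N j ∧ 2 ≤ j := by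
  rcases le_or_gt j k with h|h
  · have := conj_anti M N h; omega
  · have h1 := conj_anti M N (le_of_lt h)
    have hk : k = j - 1 := by omega
    rw [hk] at hke
    exact ⟨hk, by omega, by omega⟩

lemma main_aux (n N j i₀ : ℕ) (M P κ T : ℕ → ℕ)
    (hn : 1 ≤ n) (hM : IsPartition M) (hN : ∀ r, N ≤ r → M r = 0)
    (hj1 : 1 ≤ j) (hjn : j ≤ n)
    (hjeq : (M 1 : ℤ) - n = (i₀ : ℤ) + n - j)
    (hi01 : 1 ≤ i₀) (hi0N : i₀ < N) (hji0 : j ≤ M i₀) (hlt : M (i₀ + 1) < j)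
    (hconjj : conj M N j = i₀)
    (hPpart : IsPartition P) (hP1 : P 1 = M 1 + 1) (hPo : ∀ x, x ≠ 1 → P x = M x)
    (hκo : ∀ x, x ≠ 1 → x ≠ i₀ → κ x = M x) (hκi0 : κ i₀ = j - 1)
    (hκ1 : κ 1 < M 1) (hκpart : IsPartition κ)
    (hκct : ctilde n κ N = ctilde n M N)
    (hT : Singular n N P → T = Function.update κ i₀ (j - 2)) :
    (¬ Singular n N P → Fset n N P κ = (∅ : Set (ℕ → ℕ))) ∧
    (Singular n N P → Fset n N P κ = {T}) := by
  have hM1 : n + 1 ≤ M 1 := by omega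
  have h1I : (1:ℕ) ∈ Finset.Icc 1 N := Finset.mem_Icc.mpr ⟨le_rfl, by omega⟩
  have hi0I : i₀ ∈ Finset.Icc 1 N := Finset.mem_Icc.mpr ⟨hi01, by omega⟩
  have hctP : ctilde n P N = ctilde n M N + 2*(M 1:ℤ) + 1 - 2*n := by
    have hPe : P = Function.update M 1 (M 1 + 1) := by
      funext x
      by_cases hx : x = 1
      · subst hx; rw [hP1, Function.update_self]
      · rw [hPo x hx, Function.update_of_ne hx]
    rw [hPe, ctilde_update n N M h1I]
    unfold fI; push_cast; ring
  have hsingback : 2 ≤ j → conj M N (j-1) = i₀ → Singular n N P := by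
    intro h2 hcj
    refine ⟨j - 1, by omega, by omega, ?_⟩
    rw [conjP_eq N hP1 hPo (by omega) (show j - 1 ≤ n by omega), hcj, hP1]
    push_cast
    omega
  have hforward : Singular n N P → 2 ≤ j ∧ conj M N (j-1) = i₀ := by
    rintro ⟨k, hk1, hkn, hke⟩
    rw [conjP_eq N hP1 hPo (by omega) hkn, hP1] at hke
    push_cast at hke
    obtain ⟨hkk, hcj, h2j⟩ := witness_char M N n j k hk1 (by omega) (by omega)
    exact ⟨h2j, by omega⟩
  have hmem : ∀ Q, Q ∈ Fset n N P κ →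
      (2 ≤ j ∧ conj M N (j-1) = i₀) ∧ Q = Function.update κ i₀ (j - 2) := by
    rintro Q ⟨hInS, hct⟩
    rw [hctP] at hct
    rcases hInS with hQκ | ⟨i, c, hi1, hcv, hQup, hQpart⟩ | ⟨i, c, hi1, hcv, hpos, hQup, hQpart⟩
    · exfalso; rw [hQκ, hκct] at hct; omega
    · exfalso
      have hiN : i ≤ N := by
        by_contra hgt
        push_neg at hgt
        have hQi : Q i = κ i + 1 := by rw [hQup, Function.update_self]
        have hκi : κ i = 0 := by
          rw [hκo i (by omega) (by omega)]; exact hN i (by omega)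
        have hQi1 : Q (i-1) = κ (i-1) := by
          rw [hQup, Function.update_of_ne (by omega : i - 1 ≠ i)]
        have hκi1 : κ (i-1) = 0 := by
          rw [hκo (i-1) (by omega) (by omega)]; exact hN (i-1) (by omega)
        have h := hQpart.2 (i-1) (by omega)
        rw [show i - 1 + 1 = i from by omega] at h
        omega
      have hiI : i ∈ Finset.Icc 1 N := Finset.mem_Icc.mpr ⟨hi1, hiN⟩
      rw [hQup, ctilde_update n N κ hiI, hκct] at hct
      unfold fI at hct
      push_cast at hct
      ring_nf at hct
      have hκib : κ i ≤ κ 1 := part_anti hκpart le_rfl hi1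
      omega
    · have hiN : i < N := by
        by_contra hge
        push_neg at hge
        have : κ i = 0 := by
          rw [hκo i (by omega) (by omega)]; exact hN i (by omega)
        omega
      have hiI : i ∈ Finset.Icc 1 N := Finset.mem_Icc.mpr ⟨hi1, by omega⟩
      rw [hQup, ctilde_update n N κ hiI, hκct] at hct
      unfold fI at hct
      rw [Nat.cast_sub hpos] at hct
      push_cast at hct
      ring_nf at hct
      have hii0 : i = i₀ := by
        rcases lt_trichotomy i i₀ with h|h|h
        · have h1 : κ i₀ ≤ κ i := part_anti hκpart hi1 (le_of_lt h)
          omega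
        · exact h
        · have hκi : κ i = M i := hκo i (by omega) (by omega)
          have h2 : M i ≤ M (i₀+1) := part_anti hM (by omega) (by omega)
          omega
      rw [hii0] at hQup hpos
      have h2j : 2 ≤ j := by omega
      have hQio1 : Q (i₀+1) = M (i₀+1) := by
        rw [hQup, Function.update_of_ne (by omega : i₀ + 1 ≠ i₀),
            hκo (i₀+1) (by omega) (by omega)]
      have hQio : Q i₀ = κ i₀ - 1 := by rw [hQup, Function.update_self]
      have hstep := hQpart.2 i₀ hi01
      have hMl : M (i₀+1) + 2 ≤ j := by omega
      have hconjge : i₀ ≤ conj M N (j-1) :=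
        (conj_ge_iff hM hN (by omega) hi01).mpr (by omega)
      have hconjle : conj M N (j-1) ≤ i₀ := by
        by_contra hcc
        push_neg at hcc
        have := (conj_ge_iff hM hN (show 1 ≤ j - 1 by omega)
          (show 1 ≤ i₀ + 1 by omega)).mp (by omega)
        omega
      refine ⟨⟨h2j, by omega⟩, ?_⟩
      rw [hQup, hκi0, show j - 1 - 1 = j - 2 from by omega]
  have hQ0mem : 2 ≤ j → conj M N (j-1) = i₀ →
      Function.update κ i₀ (j - 2) ∈ Fset n N P κ := by
    intro h2j hcj
    have hMl : M (i₀+1) + 2 ≤ j := by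
      by_contra hcc
      push_neg at hcc
      have := (conj_ge_iff hM hN (show 1 ≤ j - 1 by omega)
        (show 1 ≤ i₀ + 1 by omega)).mpr (by omega)
      omega
    have hQpart : IsPartition (Function.update κ i₀ (j - 2)) := by
      constructor
      · rw [Function.update_of_ne (by omega : (0:ℕ) ≠ i₀), hκo 0 (by omega) (by omega)]
        exact hM.1
      · intro i hi
        by_cases hA : i + 1 = i₀
        · rw [Function.update_of_ne (show i ≠ i₀ by omega), hA, Function.update_self]
          have h3 : κ i₀ ≤ κ i := part_anti hκpart hi (by omega)
          omega
        · by_cases hB : i = i₀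
          · rw [hB, Function.update_self,
                Function.update_of_ne (show i₀ + 1 ≠ i₀ by omega),
                hκo (i₀+1) (by omega) (by omega)]
            omega
          · rw [Function.update_of_ne hA, Function.update_of_ne hB]
            exact hκpart.2 i hi
    simp only [Fset, Set.mem_setOf_eq]
    constructor
    · right; right
      refine ⟨i₀, κ i₀, hi01, rfl, by omega, ?_, hQpart⟩
      rw [hκi0, show j - 1 - 1 = j - 2 from by omega]
    · rw [ctilde_update n N κ hi0I, hκct, hctP, hκi0]
      unfold fI
      have c1 : ((j - 2 : ℕ) : ℤ) = (j:ℤ) - 2 := by omega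
      have c2 : ((j - 1 : ℕ) : ℤ) = (j:ℤ) - 1 := by omega
      rw [c1, c2]
      have hM1e : (M 1 : ℤ) = i₀ + 2*n - j := by omega
      rw [hM1e]
      ring
  constructor
  · intro hreg
    apply Set.eq_empty_iff_forall_notMem.mpr
    intro Q hQ
    obtain ⟨⟨h2j, hcj⟩, -⟩ := hmem Q hQ
    exact hreg (hsingback h2j hcj)
  · intro hsing
    obtain ⟨h2j, hcj⟩ := hforward hsing
    rw [hT hsing]
    apply Set.eq_of_subset_of_subset
    · intro Q hQ
      obtain ⟨-, hQe⟩ := hmem Q hQ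
      rw [Set.mem_singleton_iff]
      exact hQe
    · intro Q hQ
      rw [Set.mem_singleton_iff] at hQ
      rw [hQ]
      exact hQ0mem h2j hcj


/-- Let `μ ∈ H(1,n)` be singular and `λ` obtained from `μ` by adding one box to the first row.
Then `F_λ(μ^♯) = ∅` if `λ` is regular, and `F_λ(μ^♯) = {λ^♯}` if `λ` is singular. -/
theorem Fset_sharp (n : ℕ) (hn : 1 ≤ n) (M : ℕ → ℕ) (hM : IsPartition M)
    (hMH : M 2 ≤ n) (N : ℕ) (hN : ∀ r, N ≤ r → M r = 0)
    (hMsing : Singular n N M)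
    (P : ℕ → ℕ) (hP : AddsBox M P 1 (M 1 + 1)) :
    (¬ Singular n N P → Fset n N P (sharpOp n N M) = (∅ : Set (ℕ → ℕ))) ∧
    (Singular n N P → Fset n N P (sharpOp n N M) = {sharpOp n N P}) := by
  classical
  obtain ⟨-, -, hPupd, hPpart⟩ := hP
  have hP1 : P 1 = M 1 + 1 := by rw [hPupd]; simp
  have hPo : ∀ x, x ≠ 1 → P x = M x := fun x hx => by
    rw [hPupd, Function.update_of_ne hx]
  have hjex := hMsing.choose_spec
  set j := hMsing.choose with hjdef
  obtain ⟨hj1, hjn, hjeq⟩ := hjex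
  obtain ⟨hi01, hi0N, hji0, hlt⟩ := sing_pack hM hN hj1 hjn hjeq
  have hrs := rnum_eq hM hN hj1 hjn hi01
  set i₀ := conj M N j with hi0def
  set r := rnum n N M j with hrdef
  have hminj : j ≤ min n (M i₀) := le_min hjn hji0
  have hr1 : 1 ≤ r := by omega
  have hN2 : 2 ≤ N := by omega
  have hNP : ∀ x, N ≤ x → P x = 0 := by
    intro x hx
    rw [hPo x (by omega)]; exact hN x hx
  set κ := sharpOp n N M with hκdef0
  have hκdef : κ = sharp M i₀ r := by
    rw [hκdef0, hi0def, hrdef, hjdef]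
    unfold sharpOp
    rw [dif_pos hMsing]
  have hκo : ∀ x, x ≠ 1 → x ≠ i₀ → κ x = M x := by
    intro x hx1 hxi
    rw [hκdef]
    unfold sharp
    rw [Function.update_of_ne hx1, Function.update_of_ne hxi]
  by_cases hc : i₀ = 1
  · -- case i₀ = 1
    have hmna : n ≤ M i₀ := by rw [hc]; omega
    have hminn : min n (M i₀) = n := min_eq_left hmna
    have hrv : r + j = n + 1 := by omega
    have hκ1v : κ 1 = M 1 - r - r := by
      rw [hκdef, hc]
      unfold sharp
      rw [Function.update_self, Function.update_self]
    have hκi0 : κ i₀ = j - 1 := by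
      rw [hc, hκ1v]; omega
    have hκ1lt : κ 1 < M 1 := by rw [hκ1v]; omega
    have hlt2 : M 2 < j := by
      have h := hlt
      rw [hc] at h
      exact h
    have hκpart : IsPartition κ := by
      constructor
      · rw [hκo 0 (by omega) (by omega)]; exact hM.1
      · intro i hi
        by_cases hi1 : i = 1
        · subst hi1
          have h2 : κ 2 = M 2 := hκo 2 (by omega) (by omega)
          show κ 2 ≤ κ 1
          rw [h2, hκ1v]
          omega
        · rw [hκo (i+1) (by omega) (by omega), hκo i hi1 (by omega)]
          exact hM.2 i hi
    have hκct : ctilde n κ N = ctilde n M N := by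
      have hκe : κ = Function.update M 1 (M 1 - r - r) := by
        funext x
        by_cases hx : x = 1
        · subst hx; rw [hκ1v, Function.update_self]
        · rw [hκo x hx (by omega), Function.update_of_ne hx]
      rw [hκe, ctilde_update n N M (Finset.mem_Icc.mpr ⟨le_rfl, by omega⟩)]
      have e1 : M 1 - r - r = j - 1 := by omega
      rw [e1]
      unfold fI
      have c2 : ((j - 1 : ℕ) : ℤ) = (j:ℤ) - 1 := by omega
      have hM1e : (M 1 : ℤ) = 1 + 2*n - j := by omega
      rw [c2, hM1e]
      push_cast
      ring
    have hT : Singular n N P → sharpOp n N P = Function.update κ i₀ (j - 2) := by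
      intro hs
      obtain ⟨hk1, hkn, hke⟩ := hs.choose_spec
      have hcPk := conjP_eq (M := M) (P := P) N hP1 hPo (show n ≤ M 1 by omega) hkn
      obtain ⟨hkk, hcj, h2j⟩ := witness_char M N n j hs.choose hk1 (by omega) (by omega)
      have hsh : sharpOp n N P
          = sharp P (conj P N hs.choose) (rnum n N P hs.choose) := by
        unfold sharpOp
        rw [dif_pos hs]
      have hcP : conj P N (j-1) = i₀ := by
        rw [conjP_eq N hP1 hPo (by omega) (show j-1 ≤ n by omega)]
        omega
      have hrP := rnum_eq hPpart hNP (show 1 ≤ j - 1 by omega) (show j - 1 ≤ n by omega)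
        (by rw [hcP]; omega)
      rw [hcP] at hrP
      have hPv : P i₀ = M 1 + 1 := by rw [hc, hP1]
      have hminP : min n (P i₀) = n := min_eq_left (by omega)
      have hrPv : rnum n N P (j-1) = r + 1 := by omega
      rw [hsh, hkk, hcP, hrPv]
      funext x
      by_cases hx1 : x = 1
      · subst hx1
        rw [hc]
        unfold sharp
        rw [Function.update_self, Function.update_self, Function.update_self, hP1]
        omega
      · have hx0 : x ≠ i₀ := by omega
        rw [Function.update_of_ne hx0, hκo x hx1 hx0, hc]
        unfold sharp
        rw [Function.update_of_ne hx1, Function.update_of_ne hx1, hPo x hx1]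
    exact main_aux n N j i₀ M P κ (sharpOp n N P) hn hM hN hj1 hjn hjeq hi01 hi0N
      hji0 hlt hi0def.symm hPpart hP1 hPo hκo hκi0 hκ1lt hκpart hκct hT
  · -- case i₀ ≥ 2
    have hi02 : 2 ≤ i₀ := by omega
    have hMi0n : M i₀ ≤ n := le_trans (part_anti hM (by omega) hi02) hMH
    have hminv : min n (M i₀) = M i₀ := min_eq_right hMi0n
    have hriv : M i₀ + 1 = j + r := by omega
    have hκ1v : κ 1 = M 1 - r := by
      rw [hκdef]
      unfold sharp
      rw [Function.update_self, Function.update_of_ne (show (1:ℕ) ≠ i₀ by omega)]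
    have hκi0 : κ i₀ = j - 1 := by
      rw [hκdef]
      unfold sharp
      rw [Function.update_of_ne (show i₀ ≠ 1 by omega), Function.update_self]
      omega
    have hκ1lt : κ 1 < M 1 := by rw [hκ1v]; omega
    have hκ1b : n + 1 ≤ κ 1 := by rw [hκ1v]; omega
    have hκpart : IsPartition κ := by
      constructor
      · rw [hκo 0 (by omega) (by omega)]; exact hM.1
      · intro i hi
        by_cases hB : i = i₀
        · rw [hB, hκo (i₀+1) (by omega) (by omega), hκi0]
          omega
        · by_cases hA : i + 1 = i₀
          · rw [hA, hκi0]
            by_cases hi1 : i = 1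
            · rw [hi1]; omega
            · rw [hκo i hi1 hB]
              have := part_anti hM (show 1 ≤ i by omega) (show i ≤ i₀ by omega)
              omega
          · by_cases hi1 : i = 1
            · subst hi1
              have h2 : κ 2 = M 2 := hκo 2 (by omega) (by omega)
              show κ 2 ≤ κ 1
              rw [h2]
              omega
            · rw [hκo (i+1) (by omega) hA, hκo i hi1 hB]
              exact hM.2 i hi
    have hκct : ctilde n κ N = ctilde n M N := by
      have hκe : κ = Function.update (Function.update M i₀ (M i₀ - r)) 1 (M 1 - r) := by
        rw [hκdef]
        unfold sharp
        rw [Function.update_of_ne (show (1:ℕ) ≠ i₀ by omega)]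
      rw [hκe, ctilde_update n N _ (Finset.mem_Icc.mpr ⟨le_rfl, by omega⟩),
        ctilde_update n N M (Finset.mem_Icc.mpr ⟨hi01, by omega⟩),
        Function.update_of_ne (show (1:ℕ) ≠ i₀ by omega)]
      unfold fI
      have c1 : ((M i₀ - r : ℕ) : ℤ) = (j:ℤ) - 1 := by omega
      have c2 : ((M 1 - r : ℕ) : ℤ) = (M 1:ℤ) - r := by omega
      have hM1e : (M 1 : ℤ) = i₀ + 2*n - j := by omega
      have hMi0e : (M i₀ : ℤ) = (j:ℤ) + r - 1 := by omega
      rw [c1, c2, hM1e, hMi0e]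
      push_cast
      ring
    have hT : Singular n N P → sharpOp n N P = Function.update κ i₀ (j - 2) := by
      intro hs
      obtain ⟨hk1, hkn, hke⟩ := hs.choose_spec
      have hcPk := conjP_eq (M := M) (P := P) N hP1 hPo (show n ≤ M 1 by omega) hkn
      obtain ⟨hkk, hcj, h2j⟩ := witness_char M N n j hs.choose hk1 (by omega) (by omega)
      have hsh : sharpOp n N P
          = sharp P (conj P N hs.choose) (rnum n N P hs.choose) := by
        unfold sharpOp
        rw [dif_pos hs]
      have hcP : conj P N (j-1) = i₀ := by
        rw [conjP_eq N hP1 hPo (by omega) (show j-1 ≤ n by omega)]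
        omega
      have hrP := rnum_eq hPpart hNP (show 1 ≤ j - 1 by omega) (show j - 1 ≤ n by omega)
        (by rw [hcP]; omega)
      rw [hcP] at hrP
      have hPv : P i₀ = M i₀ := hPo i₀ (by omega)
      have hminP : min n (P i₀) = M i₀ := by rw [hPv]; exact min_eq_right hMi0n
      have hrPv : rnum n N P (j-1) = r + 1 := by omega
      rw [hsh, hkk, hcP, hrPv]
      funext x
      by_cases hx1 : x = 1
      · subst hx1
        unfold sharp
        rw [Function.update_self, Function.update_of_ne (show (1:ℕ) ≠ i₀ by omega),
          Function.update_of_ne (show (1:ℕ) ≠ i₀ by omega), hP1, hκ1v]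
        omega
      · by_cases hx0 : x = i₀
        · subst hx0
          unfold sharp
          rw [Function.update_of_ne (show i₀ ≠ 1 by omega), Function.update_self,
            Function.update_self, hPv]
          omega
        · rw [Function.update_of_ne hx0, hκo x hx1 hx0]
          unfold sharp
          rw [Function.update_of_ne hx1, Function.update_of_ne hx0, hPo x hx1]
    exact main_aux n N j i₀ M P κ (sharpOp n N P) hn hM hN hj1 hjn hjeq hi01 hi0N
      hji0 hlt hi0def.symm hPpart hP1 hPo hκo hκi0 hκ1lt hκpart hκct hT
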